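/- Let k be a field, n a positive integer, w ∈ ℤⁿ, and J an ideal of the Laurent polynomial ring k[x₁^{±1},…,x_n^{±1}]. Then the initial ideal in_w J is generated by its elements whose supports are contained in w^⊥; that is, in_w J equals the ideal generated by {g ∈ in_w J : ⟨u,w⟩ = 0 for every u ∈ supp g}. -/

import Mathlib

noncomputable section
open scoped Classical

/-- The Laurent polynomial ring `k[x₁^{±1},…,x_n^{±1}]`, realized as the additive monoid
algebra on `ℤⁿ`. -/
abbrev Laur (k : Type*) [CommRing k] (n : ℕ) : Type _ := AddMonoidAlgebra k (Fin n → ℤ)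

variable {k : Type*} {n : ℕ}

/-- The standard pairing `⟨u,w⟩ = ∑ i, uᵢ wᵢ`. -/
def pairZ (u w : Fin n → ℤ) : ℤ := ∑ i, u i * w i

/-- `trop(f)(w) = min {⟨u,w⟩ : u ∈ supp f}` (junk value for `f = 0`). -/
def tropZ [CommRing k] (w : Fin n → ℤ) (f : Laur k n) : ℤ :=
  sInf ((fun u => pairZ u w) '' (f.coeff.support : Set (Fin n → ℤ)))

/-- `init_w f`: the sum of the terms of `f` whose exponent `u` satisfies
`⟨u,w⟩ = trop(f)(w)`; `init_w 0 = 0`. -/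
def initZ [CommRing k] (w : Fin n → ℤ) (f : Laur k n) : Laur k n :=
  AddMonoidAlgebra.ofCoeff (Finsupp.filter (fun u => pairZ u w = tropZ w f) f.coeff)

/-- The initial ideal `in_w I`, generated by the initial forms of elements of `I`. -/
def initIdealZ [CommRing k] (w : Fin n → ℤ) (I : Ideal (Laur k n)) : Ideal (Laur k n) :=
  Ideal.span {g | ∃ f ∈ I, g = initZ w f}

/-- `σ_{ξ,w}`: the `k`-algebra automorphism of the Laurent polynomial ring determined by
`x^u ↦ ξ^{⟨u,w⟩} x^u`. -/
def sigmaTw [Field k] (ξ : kˣ) (w : Fin n → ℤ) (f : Laur k n) : Laur k n :=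
  ∑ u ∈ f.coeff.support, AddMonoidAlgebra.ofCoeff (Finsupp.single u (((ξ ^ pairZ u w : kˣ) : k) * f.coeff u))

/-- The monomial `x^u` of the Laurent polynomial ring. -/
def xu [CommRing k] (u : Fin n → ℤ) : Laur k n := AddMonoidAlgebra.single u 1

lemma pairZ_add (u v w : Fin n → ℤ) : pairZ (u + v) w = pairZ u w + pairZ v w := by
  simp [pairZ, add_mul, Finset.sum_add_distrib]

lemma pairZ_neg (u w : Fin n → ℤ) : pairZ (-u) w = -pairZ u w := by
  simp [pairZ, neg_mul]

lemma xu_mul_xu [CommRing k] (u v : Fin n → ℤ) : (xu u : Laur k n) * xu v = xu (u + v) := by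
  simp [xu, AddMonoidAlgebra.single_mul_single]

lemma initZ_mem_support [CommRing k] {w : Fin n → ℤ} {f : Laur k n} {u : Fin n → ℤ}
    (h : u ∈ (initZ w f).coeff.support) : pairZ u w = tropZ w f := by
  have := Finsupp.mem_support_iff.mp h
  rw [initZ, AddMonoidAlgebra.coeff_ofCoeff, Finsupp.filter_apply] at this
  by_contra hne
  simp [hne] at this

/-- For any ideal `J` of the Laurent polynomial ring, the initial ideal
`in_w J` is generated by its elements whose supports are contained in
`w^⊥ = {u : ⟨u,w⟩ = 0}`. -/
theorem initial_ideal_generated_by_perp [Field k] (hn : 0 < n) (w : Fin n → ℤ)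
    (J : Ideal (Laur k n)) :
    initIdealZ w J =
      Ideal.span {g : Laur k n | g ∈ initIdealZ w J ∧ ∀ u ∈ g.coeff.support, pairZ u w = 0} := by
  apply le_antisymm
  · rw [initIdealZ]
    apply Ideal.span_le.mpr
    rintro g ⟨f, hf, rfl⟩
    by_cases hg : initZ w f = 0
    · rw [hg]; exact (Ideal.span _).zero_mem
    · set g := initZ w f with hgdef
      have hgI : g ∈ initIdealZ w J := Ideal.subset_span ⟨f, hf, rfl⟩
      obtain ⟨u₀, hu₀⟩ := Finsupp.support_nonempty_iff.mpr (AddMonoidAlgebra.coeff_eq_zero.not.mpr hg)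
      set h : Laur k n := xu (-u₀) * g with hh
      have hhS : h ∈ {g : Laur k n | g ∈ initIdealZ w J ∧ ∀ u ∈ g.coeff.support, pairZ u w = 0} := by
        constructor
        · exact Ideal.mul_mem_left _ _ hgI
        · intro u hu
          rw [hh, xu, AddMonoidAlgebra.support_coeff_single_mul g 1
            (fun y => by simp) (-u₀)] at hu
          obtain ⟨v, hv, rfl⟩ := Finset.mem_map.mp hu
          have h1 : pairZ v w = tropZ w f := initZ_mem_support hv
          have h2 : pairZ u₀ w = tropZ w f := initZ_mem_support hu₀
          show pairZ (-u₀ + v) w = 0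
          rw [pairZ_add, pairZ_neg, h1, h2]
          ring
      have : g = xu u₀ * h := by
        rw [hh, ← mul_assoc, xu_mul_xu, add_neg_cancel, xu]
        rw [show (AddMonoidAlgebra.single (0 : Fin n → ℤ) (1 : k)) = 1 from rfl, one_mul]
      rw [this]
      exact Ideal.mul_mem_left _ _ (Ideal.subset_span hhS)
  · apply Ideal.span_le.mpr
    rintro g ⟨hg, -⟩
    exact hg

end
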